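/- With d, p, q as before (d > 0 non-square rational, p < 0, q ≠ 0, d' := p² − q²d > 0), suppose in addition that d' = d·t² for some rational t > 0. Then s₋ = i√(−(p − q√d)) lies in the subfield ℚ(√d, s₊) of ℂ; concretely, s₋ = −t·√d / s₊. Hence all four roots ±s₊, ±s₋ of X⁴ − 2pX² + d' lie in ℚ(√d, s₊), i.e. the extension is normal. -/
import Mathlib


/-- Case (B): if `d' = p² − q²d = d·t²` for some rational `t > 0`, then
`s₋ = −t√d/s₊`, and all four roots `±s₊, ±s₋` of `X⁴ − 2pX² + d'` lie in
`ℚ(√d, s₊)`, i.e. the extension is normal. -/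
theorem stmt_8 (d p q : ℚ) (hd : 0 < d) (hdns : ¬∃ r : ℚ, r ^ 2 = d)
    (hp : p < 0) (hq : q ≠ 0) (hdisc : 0 < p ^ 2 - q ^ 2 * d)
    (t : ℚ) (ht : 0 < t) (hdt : p ^ 2 - q ^ 2 * d = d * t ^ 2)
    (splus sminus : ℂ)
    (hsp : splus = Complex.I * (Real.sqrt (-((p : ℝ) + (q : ℝ) * Real.sqrt d)) : ℝ))
    (hsm : sminus = Complex.I * (Real.sqrt (-((p : ℝ) - (q : ℝ) * Real.sqrt d)) : ℝ)) :
    sminus = -(t : ℂ) * ((Real.sqrt d : ℝ) : ℂ) / splus ∧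
    ∀ z ∈ ({splus, -splus, sminus, -sminus} : Set ℂ),
      z ∈ IntermediateField.adjoin ℚ ({((Real.sqrt d : ℝ) : ℂ), splus} : Set ℂ) := by
  set sd : ℝ := Real.sqrt (d : ℝ) with hsdd
  have hd' : (0:ℝ) < (d:ℝ) := by exact_mod_cast hd
  have ht' : (0:ℝ) < (t:ℝ) := by exact_mod_cast ht
  have hp' : (p:ℝ) < 0 := by exact_mod_cast hp
  have hsd2 : sd ^ 2 = (d:ℝ) := Real.sq_sqrt hd'.le
  have hsdpos : 0 < sd := Real.sqrt_pos.mpr hd'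
  have hdt' : (p:ℝ) ^ 2 - (q:ℝ) ^ 2 * (d:ℝ) = (d:ℝ) * (t:ℝ) ^ 2 := by exact_mod_cast hdt
  have hprod : ((p:ℝ) + q * sd) * ((p:ℝ) - q * sd) = (d:ℝ) * (t:ℝ)^2 := by
    have : ((p:ℝ) + q * sd) * ((p:ℝ) - q * sd) = (p:ℝ)^2 - (q:ℝ)^2 * sd^2 := by ring
    rw [this, hsd2, hdt']
  have hprodpos : 0 < ((p:ℝ) + q * sd) * ((p:ℝ) - q * sd) := by
    rw [hprod]; positivity
  have hA : 0 < -((p:ℝ) + q * sd) := by nlinarith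
  have hB : 0 < -((p:ℝ) - q * sd) := by nlinarith
  have hAB : -((p:ℝ) + q * sd) * -((p:ℝ) - q * sd) = (d:ℝ) * (t:ℝ)^2 := by
    rw [← hprod]; ring
  have hsqrtAB : Real.sqrt (-((p:ℝ) + q * sd)) * Real.sqrt (-((p:ℝ) - q * sd))
      = (t:ℝ) * sd := by
    rw [← Real.sqrt_mul hA.le, hAB]
    rw [show (d:ℝ) * (t:ℝ)^2 = ((t:ℝ) * sd)^2 by rw [mul_pow, hsd2]; ring]
    exact Real.sqrt_sq (by positivity)
  have hspne : splus ≠ 0 := by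
    rw [hsp]
    apply mul_ne_zero Complex.I_ne_zero
    exact_mod_cast Real.sqrt_ne_zero'.mpr hA
  have hmul : splus * sminus = -((t:ℝ) * sd : ℝ) := by
    rw [hsp, hsm]
    have : (Complex.I * (Real.sqrt (-((p:ℝ) + q * sd)) : ℂ)) *
        (Complex.I * (Real.sqrt (-((p:ℝ) - q * sd)) : ℂ))
        = (Complex.I * Complex.I) * ((Real.sqrt (-((p:ℝ) + q * sd)) : ℂ) *
          (Real.sqrt (-((p:ℝ) - q * sd)) : ℂ)) := by ring
    rw [this, Complex.I_mul_I, ← Complex.ofReal_mul, hsqrtAB]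
    push_cast
    ring
  have h1 : sminus = -(t : ℂ) * ((sd : ℝ) : ℂ) / splus := by
    field_simp
    rw [mul_comm] at hmul
    rw [hmul]
    push_cast
    ring
  refine ⟨h1, ?_⟩
  intro z hz
  set K := IntermediateField.adjoin ℚ ({((sd : ℝ) : ℂ), splus} : Set ℂ) with hK
  have hsdK : ((sd : ℝ) : ℂ) ∈ K := IntermediateField.subset_adjoin ℚ _ (Or.inl rfl)
  have hspK : splus ∈ K := IntermediateField.subset_adjoin ℚ _ (Or.inr rfl)
  have htK : ((t : ℚ) : ℂ) ∈ K := by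
    have := IntermediateField.algebraMap_mem K t
    simpa using this
  have hsmK : sminus ∈ K := by
    rw [h1]
    exact div_mem (mul_mem (neg_mem htK) hsdK) hspK
  simp only [Set.mem_insert_iff, Set.mem_singleton_iff] at hz
  rcases hz with rfl | rfl | rfl | rfl
  · exact hspK
  · exact neg_mem hspK
  · exact hsmK
  · exact neg_mem hsmK
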